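/- (Theorem 1) Let q be an odd prime power with q ≡ 2 (mod 3), and let H be the Hadamard matrix [[I_{q+1} − U_qᵀ, U_q + I_{q+1}], [I_{q+1} + U_qᵀ, U_q − I_{q+1}]]. The 4q+2 vectors r + 2·1̄ ∈ GF(3)^{2q+2}, where r ranges over the rows of H and of −H (reduced mod 3) other than the all-one row of H and its negative, are pairwise distinct (0,1)-codewords of L(q) of weight q+1, and they form the blocks of a 3-(2q+2, q+1, (q−1)/2) design: for every set of 3 distinct coordinate positions, exactly (q−1)/2 of these 4q+2 vectors have entry 1 at all three positions. -/

import Mathlib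

open Matrix Finset

/-- The Pless matrix `S_q`, with rows and columns indexed by `GF(q) ∪ {∞}`
(`none` playing the role of `∞`), built from the quadratic character of `GF(q)`. -/
def Smat (F : Type) [Field F] [Fintype F] [DecidableEq F] :
    Matrix (Option F) (Option F) ℤ := fun i j =>
  match i, j with
  | none, none => 0
  | none, some _ => 1
  | some _, none => quadraticChar F (-1)
  | some a, some b => quadraticChar F (a - b)

/-- The matrix `U_q`, obtained from `S_q` by replacing each entry `s_{a,∞}`
(`a ∈ GF(q)`) in the column labeled `∞` by `-1`. -/
def Umat (F : Type) [Field F] [Fintype F] [DecidableEq F] :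
    Matrix (Option F) (Option F) ℤ := fun i j =>
  match i, j with
  | some _, none => -1
  | i, j => Smat F i j

/-- The row of the generator matrix `(I | U_q)` of the code `L(q)`,
reduced modulo 3, indexed by `i : Option F`. -/
def genRowL (F : Type) [Field F] [Fintype F] [DecidableEq F] (i : Option F) :
    (Option F ⊕ Option F) → ZMod 3 := fun j =>
  match j with
  | Sum.inl k => if i = k then 1 else 0
  | Sum.inr k => ((Umat F i k : ℤ) : ZMod 3)

/-- The code `L(q)`: the ternary code of length `2q+2` spanned by the rows of
`(I | U_q)` reduced modulo 3; it is monomially equivalent to the Pless symmetry code. -/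
def Lcode (F : Type) [Field F] [Fintype F] [DecidableEq F] :
    Submodule (ZMod 3) ((Option F ⊕ Option F) → ZMod 3) :=
  Submodule.span (ZMod 3) (Set.range (genRowL F))

/-- The Hadamard matrix `H = [[I − U_qᵀ, U_q + I], [I + U_qᵀ, U_q − I]]`. -/
def Hmat (F : Type) [Field F] [Fintype F] [DecidableEq F] :
    Matrix (Option F ⊕ Option F) (Option F ⊕ Option F) ℤ :=
  Matrix.fromBlocks (1 - (Umat F)ᵀ) (Umat F + 1) (1 + (Umat F)ᵀ) (Umat F - 1)

/-- The vector `r + 2·1̄` over `GF(3)`, where `r` is the row of `H` (if `s = true`)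
or of `−H` (if `s = false`) indexed by `i`, reduced modulo 3. -/
def dvec (F : Type) [Field F] [Fintype F] [DecidableEq F]
    (s : Bool) (i : Option F ⊕ Option F) : (Option F ⊕ Option F) → ZMod 3 := fun j =>
  (if s then 1 else -1) * ((Hmat F i j : ℤ) : ZMod 3) + 2


section Aux

variable {F : Type} [Field F] [Fintype F] [DecidableEq F]

lemma Umat_nn : Umat F none none = 0 := rfl
lemma Umat_ns (b : F) : Umat F none (some b) = 1 := rfl
lemma Umat_sn (a : F) : Umat F (some a) none = -1 := rfl
lemma Umat_ss (a b : F) : Umat F (some a) (some b) = quadraticChar F (a - b) := rfl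

theorem mychiSqSum : ∑ x : F, (quadraticChar F x : ℤ) * quadraticChar F x
    = (Fintype.card F : ℤ) - 1 := by
  have h : ∀ x : F, (quadraticChar F x : ℤ) * quadraticChar F x
      = 1 - (if x = 0 then 1 else 0) := by
    intro x
    by_cases hx : x = 0
    · simp [hx]
    · rw [← pow_two, quadraticChar_sq_one hx]; simp [hx]
  rw [Finset.sum_congr rfl (fun x _ => h x), Finset.sum_sub_distrib]
  simp [Finset.card_univ]

theorem mychiSum1 (hchar : ringChar F ≠ 2) (b : F) :
    ∑ a : F, quadraticChar F (a - b) = 0 :=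
  (Fintype.sum_equiv (Equiv.subRight b) _ (fun x => quadraticChar F x)
    (fun _ => rfl)).trans (quadraticChar_sum_zero hchar)

theorem mychiSum2 (hchar : ringChar F ≠ 2) (b : F) :
    ∑ a : F, quadraticChar F (b - a) = 0 :=
  (Fintype.sum_equiv (Equiv.subLeft b) _ (fun x => quadraticChar F x)
    (fun _ => rfl)).trans (quadraticChar_sum_zero hchar)

theorem mychiShift (hchar : ringChar F ≠ 2) {d : F} (hd : d ≠ 0) :
    ∑ x : F, quadraticChar F x * quadraticChar F (x + d) = -1 := by
  have key : ∀ x : F, x ≠ 0 → quadraticChar F x * quadraticChar F (x + d)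
      = quadraticChar F (1 + d * x⁻¹) := by
    intro x hx
    rw [← _root_.map_mul]
    have h : x * (x + d) = x ^ 2 * (1 + d * x⁻¹) := by field_simp
    rw [h, _root_.map_mul, quadraticChar_sq_one' hx, one_mul]
  rw [show (Finset.univ : Finset F) = insert 0 (Finset.univ.erase 0) by
    simp [Finset.insert_erase], Finset.sum_insert (by simp)]
  rw [Finset.sum_congr rfl (fun x hx => key x (Finset.mem_erase.mp hx).1)]
  have heq : ∑ x ∈ Finset.univ.erase (0:F), quadraticChar F (1 + d * x⁻¹)
      = ∑ y ∈ Finset.univ.erase (1:F), quadraticChar F y := by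
    apply Finset.sum_nbij' (i := fun x => 1 + d * x⁻¹) (j := fun y => d * (y - 1)⁻¹)
    · intro x hx
      simp only [Finset.mem_erase, Finset.mem_univ, and_true] at hx ⊢
      intro h
      have h2 : d * x⁻¹ = 0 := by linear_combination h
      simp [hd, hx] at h2
    · intro y hy
      simp only [Finset.mem_erase, Finset.mem_univ, and_true] at hy ⊢
      intro h
      have := sub_ne_zero_of_ne hy
      simp [hd, this] at h
    · intro x hx
      simp only [Finset.mem_erase, Finset.mem_univ, and_true] at hx
      field_simp
      simp [hd]
    · intro y hy
      simp only [Finset.mem_erase, Finset.mem_univ, and_true] at hy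
      have := sub_ne_zero_of_ne hy
      field_simp
      ring
    · intros; rfl
  rw [heq, Finset.sum_erase_eq_sub (by simp), quadraticChar_sum_zero hchar]
  simp

theorem mychiProd (hchar : ringChar F ≠ 2) (d : F) :
    ∑ x : F, quadraticChar F x * quadraticChar F (x + d)
      = if d = 0 then (Fintype.card F : ℤ) - 1 else -1 := by
  split_ifs with hd
  · subst hd; simpa using mychiSqSum (F := F)
  · exact mychiShift hchar hd

theorem mychiRow (hchar : ringChar F ≠ 2) (a c : F) :
    ∑ b : F, quadraticChar F (a - b) * quadraticChar F (c - b)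
      = if a = c then (Fintype.card F : ℤ) - 1 else -1 := by
  have h := mychiProd (F := F) hchar (c - a)
  rw [Fintype.sum_equiv (Equiv.subLeft a) _
    (fun x => (quadraticChar F (a - x) : ℤ) * quadraticChar F (c - x)) (fun x => by
      simp only [Equiv.subLeft_apply]
      rw [show a - (a - x) = x by ring, show c - (a - x) = x + (c - a) by ring])] at h
  rw [h]
  by_cases hac : a = c <;> simp [hac, sub_eq_zero, Ne.symm, eq_comm]

theorem mychiCol (hchar : ringChar F ≠ 2) (b c : F) :
    ∑ a : F, quadraticChar F (a - b) * quadraticChar F (a - c)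
      = if b = c then (Fintype.card F : ℤ) - 1 else -1 := by
  have h := mychiProd (F := F) hchar (b - c)
  rw [Fintype.sum_equiv (Equiv.addRight b) _
    (fun a => (quadraticChar F (a - b) : ℤ) * quadraticChar F (a - c)) (fun x => by
      simp only [Equiv.coe_addRight]
      rw [show x + b - b = x by ring, show x + b - c = x + (b - c) by ring])] at h
  rw [h]
  by_cases hbc : b = c <;> simp [hbc, sub_eq_zero]

theorem myUUT (hchar : ringChar F ≠ 2) (i j : Option F) :
    ∑ k : Option F, Umat F i k * Umat F j k
      = if i = j then (Fintype.card F : ℤ) else 0 := by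
  rw [Fintype.sum_option]
  match i, j with
  | none, none => simp [Umat_nn, Umat_ns, Finset.card_univ]
  | none, some c =>
      simp only [Umat_nn, Umat_sn, Umat_ns, Umat_ss, mul_neg, mul_one, one_mul]
      simpa using mychiSum2 hchar c
  | some a, none =>
      simp only [Umat_nn, Umat_sn, Umat_ns, Umat_ss, mul_neg, mul_one, one_mul, mul_zero,
        neg_zero, zero_add]
      simpa using mychiSum2 hchar a
  | some a, some c =>
      simp only [Umat_sn, Umat_ss, mul_neg, neg_neg, mul_one]
      rw [mychiRow hchar a c]
      by_cases h : a = c <;> simp [h]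

theorem myUTU (hchar : ringChar F ≠ 2) (i j : Option F) :
    ∑ k : Option F, Umat F k i * Umat F k j
      = if i = j then (Fintype.card F : ℤ) else 0 := by
  rw [Fintype.sum_option]
  match i, j with
  | none, none => simp [Umat_nn, Umat_sn, Finset.card_univ]
  | none, some c =>
      simp only [Umat_nn, Umat_sn, Umat_ns, Umat_ss, mul_neg, mul_one, one_mul, zero_mul,
        neg_one_mul]
      rw [Finset.sum_neg_distrib, mychiSum1 hchar c]
      simp
  | some a, none =>
      simp only [Umat_nn, Umat_sn, Umat_ns, Umat_ss, mul_neg, mul_one, one_mul, mul_zero,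
        neg_one_mul]
      rw [Finset.sum_neg_distrib, mychiSum1 hchar a]
      simp
  | some b, some c =>
      simp only [Umat_ns, Umat_ss, one_mul]
      rw [mychiCol hchar b c]
      by_cases h : b = c <;> simp [h]

theorem myUUTm (hchar : ringChar F ≠ 2) :
    Umat F * (Umat F)ᵀ = (Fintype.card F : ℤ) • 1 := by
  ext i j
  rw [Matrix.mul_apply]
  simp only [Matrix.transpose_apply, Matrix.smul_apply, Matrix.one_apply]
  rw [myUUT hchar i j]
  by_cases h : i = j <;> simp [h]

theorem myUTUm (hchar : ringChar F ≠ 2) :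
    (Umat F)ᵀ * Umat F = (Fintype.card F : ℤ) • 1 := by
  ext i j
  rw [Matrix.mul_apply]
  simp only [Matrix.transpose_apply, Matrix.smul_apply, Matrix.one_apply]
  rw [myUTU hchar i j]
  by_cases h : i = j <;> simp [h]

theorem myHHT (hchar : ringChar F ≠ 2) :
    Hmat F * (Hmat F)ᵀ
      = (2 * (Fintype.card F : ℤ) + 2) • 1 := by
  rw [Hmat, Matrix.fromBlocks_transpose, Matrix.fromBlocks_multiply, ← Matrix.fromBlocks_one,
    Matrix.fromBlocks_smul, Matrix.fromBlocks_inj]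
  simp only [Matrix.transpose_sub, Matrix.transpose_add, Matrix.transpose_one,
    Matrix.transpose_transpose, Matrix.mul_sub, Matrix.sub_mul, Matrix.mul_add,
    Matrix.add_mul, Matrix.mul_one, Matrix.one_mul, myUUTm hchar, myUTUm hchar, smul_zero]
  refine ⟨by module, by abel, by abel, by module⟩

theorem myHTH (hchar : ringChar F ≠ 2) :
    (Hmat F)ᵀ * Hmat F
      = (2 * (Fintype.card F : ℤ) + 2) • 1 := by
  rw [Hmat, Matrix.fromBlocks_transpose, Matrix.fromBlocks_multiply, ← Matrix.fromBlocks_one,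
    Matrix.fromBlocks_smul, Matrix.fromBlocks_inj]
  simp only [Matrix.transpose_sub, Matrix.transpose_add, Matrix.transpose_one,
    Matrix.transpose_transpose, Matrix.mul_sub, Matrix.sub_mul, Matrix.mul_add,
    Matrix.add_mul, Matrix.mul_one, Matrix.one_mul, myUUTm hchar, myUTUm hchar, smul_zero]
  refine ⟨by module, by abel, by abel, by module⟩

theorem myHrow (hchar : ringChar F ≠ 2) (i i' : Option F ⊕ Option F) :
    ∑ j, Hmat F i j * Hmat F i' j
      = if i = i' then 2 * (Fintype.card F : ℤ) + 2 else 0 := by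
  have h := congrFun (congrFun (myHHT (F := F) hchar) i) i'
  rw [Matrix.mul_apply] at h
  simp only [Matrix.transpose_apply, Matrix.smul_apply, Matrix.one_apply] at h
  rw [h]
  by_cases hii : i = i' <;> simp [hii]

theorem myHcol (hchar : ringChar F ≠ 2) (j j' : Option F ⊕ Option F) :
    ∑ i, Hmat F i j * Hmat F i j'
      = if j = j' then 2 * (Fintype.card F : ℤ) + 2 else 0 := by
  have h := congrFun (congrFun (myHTH (F := F) hchar) j) j'
  rw [Matrix.mul_apply] at h
  simp only [Matrix.transpose_apply, Matrix.smul_apply, Matrix.one_apply] at h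
  rw [h]
  by_cases hjj : j = j' <;> simp [hjj]

lemma Hmat_ll (i k : Option F) :
    Hmat F (Sum.inl i) (Sum.inl k) = (if i = k then 1 else 0) - Umat F k i := by
  simp [Hmat, Matrix.fromBlocks, Matrix.one_apply]

lemma Hmat_lr (i k : Option F) :
    Hmat F (Sum.inl i) (Sum.inr k) = Umat F i k + (if i = k then 1 else 0) := by
  simp [Hmat, Matrix.fromBlocks, Matrix.one_apply]

lemma Hmat_rl (i k : Option F) :
    Hmat F (Sum.inr i) (Sum.inl k) = (if i = k then 1 else 0) + Umat F k i := by
  simp [Hmat, Matrix.fromBlocks, Matrix.one_apply]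

lemma Hmat_rr (i k : Option F) :
    Hmat F (Sum.inr i) (Sum.inr k) = Umat F i k - (if i = k then 1 else 0) := by
  simp [Hmat, Matrix.fromBlocks, Matrix.one_apply]

lemma Umat_diag (i : Option F) : Umat F i i = 0 := by
  match i with
  | none => rfl
  | some a => rw [Umat_ss]; simp

lemma Umat_pm {i k : Option F} (h : i ≠ k) : Umat F i k = 1 ∨ Umat F i k = -1 := by
  match i, k with
  | none, none => exact absurd rfl h
  | none, some b => exact Or.inl rfl
  | some a, none => exact Or.inr rfl
  | some a, some b =>
      rw [Umat_ss]
      exact_mod_cast quadraticChar_dichotomy (sub_ne_zero_of_ne (by simpa using h))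

lemma myHpm (i j : Option F ⊕ Option F) : Hmat F i j = 1 ∨ Hmat F i j = -1 := by
  match i, j with
  | Sum.inl i, Sum.inl k =>
      rw [Hmat_ll]
      by_cases h : i = k
      · subst h; simp [Umat_diag]
      · rcases Umat_pm (F := F) (Ne.symm h) with h1 | h1 <;> simp [h, h1]
  | Sum.inl i, Sum.inr k =>
      rw [Hmat_lr]
      by_cases h : i = k
      · subst h; simp [Umat_diag]
      · rcases Umat_pm (F := F) h with h1 | h1 <;> simp [h, h1]
  | Sum.inr i, Sum.inl k =>
      rw [Hmat_rl]
      by_cases h : i = k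
      · subst h; simp [Umat_diag]
      · rcases Umat_pm (F := F) (Ne.symm h) with h1 | h1 <;> simp [h, h1]
  | Sum.inr i, Sum.inr k =>
      rw [Hmat_rr]
      by_cases h : i = k
      · subst h; simp [Umat_diag]
      · rcases Umat_pm (F := F) h with h1 | h1 <;> simp [h, h1]

lemma myHone (j : Option F ⊕ Option F) : Hmat F (Sum.inl none) j = 1 := by
  match j with
  | Sum.inl none => rw [Hmat_ll]; simp [Umat_nn]
  | Sum.inl (some b) => rw [Hmat_ll]; simp [Umat_sn]
  | Sum.inr none => rw [Hmat_lr]; simp [Umat_nn]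
  | Sum.inr (some b) => rw [Hmat_lr]; simp [Umat_ns]

theorem myUcolsum (hchar : ringChar F ≠ 2) (k : Option F) :
    ∑ i : Option F, Umat F i k = if k = none then -(Fintype.card F : ℤ) else 1 := by
  rw [Fintype.sum_option]
  match k with
  | none => simp [Umat_nn, Umat_sn, Finset.card_univ]
  | some b =>
      simp only [Umat_ns, Umat_ss]
      rw [mychiSum1 hchar b]
      simp

theorem myOneMem (hchar : ringChar F ≠ 2) (h3 : ((Fintype.card F : ℕ) : ZMod 3) = 2) :
    (fun _ : Option F ⊕ Option F => (1 : ZMod 3)) ∈ Lcode F := by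
  have hfun : (fun _ : Option F ⊕ Option F => (1 : ZMod 3)) = ∑ k : Option F, genRowL F k := by
    funext j
    rw [Finset.sum_apply]
    match j with
    | Sum.inl k' =>
        simp only [genRowL]
        rw [Finset.sum_ite_eq' Finset.univ k' (fun _ => (1 : ZMod 3))]
        simp
    | Sum.inr k' =>
        simp only [genRowL]
        rw [show ∑ k : Option F, ((Umat F k k' : ℤ) : ZMod 3)
            = (((∑ k : Option F, Umat F k k' : ℤ)) : ZMod 3) by push_cast; rfl]
        rw [myUcolsum hchar k']
        match k' with
        | none => rw [if_pos rfl]; push_cast [h3]; decide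
        | some b => simp
  rw [hfun]
  exact Submodule.sum_mem _ (fun k _ => Submodule.subset_span ⟨k, rfl⟩)

theorem myKeysum (hchar : ringChar F ≠ 2) (sgn : ℤ) (i k' : Option F) :
    ∑ k : Option F, ((if i = k then (1:ℤ) else 0) + sgn * Umat F k i) * Umat F k k'
      = Umat F i k' + sgn * (if i = k' then (Fintype.card F : ℤ) else 0) := by
  simp only [add_mul, ite_mul, one_mul, zero_mul, mul_assoc, Finset.sum_add_distrib,
    ← Finset.mul_sum]
  rw [Finset.sum_ite_eq Finset.univ i (fun k => Umat F k k'), myUTU hchar i k']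
  simp

theorem myCombo (hchar : ringChar F ≠ 2) (h3 : ((Fintype.card F : ℕ) : ZMod 3) = 2)
    (sgn : ℤ) (i : Option F) :
    (fun j : Option F ⊕ Option F => match j with
      | Sum.inl k' => (((if i = k' then (1:ℤ) else 0) + sgn * Umat F k' i : ℤ) : ZMod 3)
      | Sum.inr k' => ((Umat F i k' - sgn * (if i = k' then 1 else 0) : ℤ) : ZMod 3))
      ∈ Lcode F := by
  have hfun : (fun j : Option F ⊕ Option F => match j with
      | Sum.inl k' => (((if i = k' then (1:ℤ) else 0) + sgn * Umat F k' i : ℤ) : ZMod 3)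
      | Sum.inr k' => ((Umat F i k' - sgn * (if i = k' then 1 else 0) : ℤ) : ZMod 3))
      = ∑ k : Option F,
          ((((if i = k then (1:ℤ) else 0) + sgn * Umat F k i : ℤ) : ZMod 3)) • genRowL F k := by
    funext j
    rw [Finset.sum_apply]
    simp only [Pi.smul_apply, smul_eq_mul]
    match j with
    | Sum.inl k' =>
        simp only [genRowL]
        rw [Finset.sum_congr rfl (fun k _ => by rw [mul_ite, mul_one, mul_zero])]
        rw [Finset.sum_ite_eq' Finset.univ k']
        simp
    | Sum.inr k' =>
        simp only [genRowL]
        rw [Finset.sum_congr rfl (fun k _ => by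
          rw [show (((if i = k then (1:ℤ) else 0) + sgn * Umat F k i : ℤ) : ZMod 3)
              * ((Umat F k k' : ℤ) : ZMod 3)
              = ((((if i = k then (1:ℤ) else 0) + sgn * Umat F k i) * Umat F k k' : ℤ)
                : ZMod 3) by push_cast; ring])]
        rw [show ∑ k : Option F, ((((if i = k then (1:ℤ) else 0) + sgn * Umat F k i)
              * Umat F k k' : ℤ) : ZMod 3)
            = (((∑ k : Option F, ((if i = k then (1:ℤ) else 0) + sgn * Umat F k i)
              * Umat F k k' : ℤ)) : ZMod 3) by push_cast; rfl]
        rw [myKeysum hchar sgn i k']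
        by_cases hik : i = k'
        · simp only [hik, if_pos rfl]
          push_cast [h3]
          have h30 : (3 : ZMod 3) = 0 := by decide
          linear_combination (-(sgn : ZMod 3)) * h30
        · simp [hik]
  rw [hfun]
  exact Submodule.sum_mem _ (fun k _ =>
    Submodule.smul_mem _ _ (Submodule.subset_span ⟨k, rfl⟩))

theorem myRowMem (hchar : ringChar F ≠ 2) (h3 : ((Fintype.card F : ℕ) : ZMod 3) = 2)
    (i : Option F ⊕ Option F) :
    (fun j => ((Hmat F i j : ℤ) : ZMod 3)) ∈ Lcode F := by
  obtain (i | i) := i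
  · have h := myCombo hchar h3 (-1) i
    convert h using 1
    funext j
    match j with
    | Sum.inl k' => rw [Hmat_ll]; push_cast; ring_nf
    | Sum.inr k' => rw [Hmat_lr]; push_cast; ring_nf
  · have h := myCombo hchar h3 1 i
    convert h using 1
    funext j
    match j with
    | Sum.inl k' => rw [Hmat_rl]; push_cast; ring_nf
    | Sum.inr k' => rw [Hmat_rr]; push_cast; ring_nf

theorem dvec_decomp (s : Bool) (i : Option F ⊕ Option F) :
    dvec F s i = (if s then (1 : ZMod 3) else -1) • (fun j => ((Hmat F i j : ℤ) : ZMod 3))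
      + (2 : ZMod 3) • (fun _ : Option F ⊕ Option F => (1 : ZMod 3)) := by
  funext j
  cases s <;> simp [dvec] <;> try ring

theorem dvec_cases (s : Bool) (i j : Option F ⊕ Option F) :
    (dvec F s i j = 0 ∧ (if s then (1:ℤ) else -1) * Hmat F i j = 1)
      ∨ (dvec F s i j = 1 ∧ (if s then (1:ℤ) else -1) * Hmat F i j = -1) := by
  rcases myHpm (F := F) i j with h | h <;> cases s <;> simp [dvec, h] <;> decide

theorem dvec_one_iff (s : Bool) (i j : Option F ⊕ Option F) :
    dvec F s i j = 1 ↔ Hmat F i j = (if s then (-1:ℤ) else 1) := by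
  constructor
  · intro hd
    rcases dvec_cases (F := F) s i j with ⟨h0, h1⟩ | ⟨h0, h1⟩
    · rw [hd] at h0; exact absurd h0 (by decide)
    · cases s <;> simp at h1 ⊢ <;> linarith
  · intro h
    rcases dvec_cases (F := F) s i j with ⟨h0, h1⟩ | ⟨h0, h1⟩
    · exfalso; rw [h] at h1; cases s <;> norm_num at h1
    · exact h0

theorem dvec_ne_zero_iff (s : Bool) (i j : Option F ⊕ Option F) :
    dvec F s i j ≠ 0 ↔ Hmat F i j = (if s then (-1:ℤ) else 1) := by
  rw [← dvec_one_iff]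
  rcases dvec_cases (F := F) s i j with ⟨h0, h1⟩ | ⟨h0, h1⟩ <;> rw [h0] <;> decide

end Aux

/-- (Theorem 1) For an odd prime power `q ≡ 2 (mod 3)`, the `4q+2` vectors `r + 2·1̄`,
where `r` ranges over the rows of `H` and of `−H` (mod 3) other than the all-one row of
`H` (indexed by `Sum.inl none`) and its negative, are pairwise distinct `(0,1)`-codewords
of `L(q)` of weight `q+1`, and they form the blocks of a `3-(2q+2, q+1, (q−1)/2)` design:
every set of 3 distinct coordinate positions is covered by exactly `(q−1)/2` of them. -/
theorem stmt_5 (q : ℕ) (hq : Odd q) (h3 : q % 3 = 2)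
    (F : Type) [Field F] [Fintype F] [DecidableEq F] (hF : Fintype.card F = q) :
    -- the 4q+2 vectors are pairwise distinct
    (∀ (s s' : Bool) (i i' : Option F ⊕ Option F), i ≠ Sum.inl none → i' ≠ Sum.inl none →
      dvec F s i = dvec F s' i' → s = s' ∧ i = i') ∧
    ((Finset.univ.filter (fun p : Bool × (Option F ⊕ Option F) => p.2 ≠ Sum.inl none)).image
      (fun p => dvec F p.1 p.2)).card = 4 * q + 2 ∧
    -- each is a (0,1)-codeword of L(q) of weight q+1
    (∀ (s : Bool) (i : Option F ⊕ Option F), i ≠ Sum.inl none →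
      dvec F s i ∈ Lcode F ∧
      (∀ j, dvec F s i j = 0 ∨ dvec F s i j = 1) ∧
      (Finset.univ.filter (fun j => dvec F s i j ≠ 0)).card = q + 1) ∧
    -- they form a 3-(2q+2, q+1, (q−1)/2) design
    (∀ j₁ j₂ j₃ : Option F ⊕ Option F, j₁ ≠ j₂ → j₁ ≠ j₃ → j₂ ≠ j₃ →
      (Finset.univ.filter (fun p : Bool × (Option F ⊕ Option F) =>
        p.2 ≠ Sum.inl none ∧ dvec F p.1 p.2 j₁ = 1 ∧ dvec F p.1 p.2 j₂ = 1 ∧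
          dvec F p.1 p.2 j₃ = 1)).card = (q - 1) / 2) := by
  subst hF
  have hchar : ringChar F ≠ 2 := by
    intro h
    have h2 := FiniteField.even_card_iff_char_two.mp h
    rw [Nat.odd_iff] at hq
    omega
  have h3c : ((Fintype.card F : ℕ) : ZMod 3) = 2 := by
    rw [← ZMod.natCast_mod, h3]; rfl
  have hcardI : Fintype.card (Option F ⊕ Option F) = 2 * Fintype.card F + 2 := by
    simp only [Fintype.card_sum, Fintype.card_option]; omega
  have hcardUnivI : (Finset.univ : Finset (Option F ⊕ Option F)).card
      = 2 * Fintype.card F + 2 := by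
    rw [Finset.card_univ, hcardI]
  -- Part A: distinctness
  have partA : ∀ (s s' : Bool) (i i' : Option F ⊕ Option F), i ≠ Sum.inl none →
      i' ≠ Sum.inl none → dvec F s i = dvec F s' i' → s = s' ∧ i = i' := by
    intro s s' i i' hi hi' heq
    have hkey : ∀ j, (if s then (1:ℤ) else -1) * Hmat F i j
        = (if s' then (1:ℤ) else -1) * Hmat F i' j := by
      intro j
      have he : dvec F s i j = dvec F s' i' j := congrFun heq j
      rcases dvec_cases (F := F) s i j with ⟨ha, hb⟩ | ⟨ha, hb⟩ <;>
        rcases dvec_cases (F := F) s' i' j with ⟨hc, hd⟩ | ⟨hc, hd⟩ <;>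
        rw [hb, hd] <;> rw [ha, hc] at he <;>
        first
          | rfl
          | (exact absurd he (by decide))
    have hsq : ∀ j, Hmat F i' j
        = ((if s then (1:ℤ) else -1) * (if s' then (1:ℤ) else -1)) * Hmat F i j := by
      intro j
      have h := hkey j
      cases s <;> cases s' <;> simp at h ⊢ <;> linarith
    have hdiag : ∑ j, Hmat F i j * Hmat F i j = 2 * (Fintype.card F : ℤ) + 2 := by
      have h := myHrow (F := F) hchar i i
      simpa using h
    have hsum := myHrow (F := F) hchar i i'
    rw [Finset.sum_congr rfl (fun j _ => by rw [hsq j, mul_left_comm]),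
      ← Finset.mul_sum, hdiag] at hsum
    by_cases hii : i = i'
    · subst hii
      rw [if_pos rfl] at hsum
      refine ⟨?_, rfl⟩
      cases s <;> cases s' <;>
        first
          | rfl
          | (exfalso; simp at hsum; omega)
    · rw [if_neg hii] at hsum
      exfalso
      cases s <;> cases s' <;> simp at hsum <;> omega
  -- Part B: cardinality of the image
  have partB : ((Finset.univ.filter
      (fun p : Bool × (Option F ⊕ Option F) => p.2 ≠ Sum.inl none)).image
      (fun p => dvec F p.1 p.2)).card = 4 * Fintype.card F + 2 := by
    rw [Finset.card_image_of_injOn]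
    · have hfe : (Finset.univ.filter
          (fun p : Bool × (Option F ⊕ Option F) => p.2 ≠ Sum.inl none))
          = (Finset.univ : Finset Bool) ×ˢ
            ((Finset.univ : Finset (Option F ⊕ Option F)).erase (Sum.inl none)) := by
        ext p
        simp [Finset.mem_product, Finset.mem_erase]
      rw [hfe, Finset.card_product, Finset.card_erase_of_mem (Finset.mem_univ _),
        hcardUnivI]
      rw [Finset.card_univ, Fintype.card_bool]
      omega
    · intro p hp p' hp' hpe
      simp only [Finset.coe_filter, Set.mem_setOf_eq, Finset.mem_univ, true_and] at hp hp'
      obtain ⟨hs, hi⟩ := partA p.1 p'.1 p.2 p'.2 hp hp' hpe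
      exact Prod.ext hs hi
  -- Part C: codewords of weight q+1
  have partC : ∀ (s : Bool) (i : Option F ⊕ Option F), i ≠ Sum.inl none →
      dvec F s i ∈ Lcode F ∧ (∀ j, dvec F s i j = 0 ∨ dvec F s i j = 1) ∧
      (Finset.univ.filter (fun j => dvec F s i j ≠ 0)).card = Fintype.card F + 1 := by
    intro s i hi
    refine ⟨?_, fun j => ?_, ?_⟩
    · rw [dvec_decomp]
      exact Submodule.add_mem _ (Submodule.smul_mem _ _ (myRowMem hchar h3c i))
        (Submodule.smul_mem _ _ (myOneMem hchar h3c))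
    · rcases dvec_cases (F := F) s i j with ⟨h, _⟩ | ⟨h, _⟩
      · exact Or.inl h
      · exact Or.inr h
    · have hsum0 : ∑ j, Hmat F i j = 0 := by
        have h := myHrow (F := F) hchar i (Sum.inl none)
        rw [if_neg hi] at h
        rw [← h]
        exact Finset.sum_congr rfl (fun j _ => by rw [myHone, mul_one])
      have hsplit := Finset.sum_filter_add_sum_filter_not Finset.univ
        (fun j => Hmat F i j = 1) (fun j => Hmat F i j)
      have e1 : ∑ j ∈ Finset.univ.filter (fun j => Hmat F i j = 1), Hmat F i j
          = ((Finset.univ.filter (fun j : Option F ⊕ Option F =>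
              Hmat F i j = 1)).card : ℤ) := by
        rw [Finset.sum_congr rfl (fun j hj => (Finset.mem_filter.mp hj).2)]
        simp
      have e2 : ∑ j ∈ Finset.univ.filter (fun j => ¬ Hmat F i j = 1), Hmat F i j
          = -(((Finset.univ.filter (fun j : Option F ⊕ Option F =>
              ¬ Hmat F i j = 1)).card : ℤ)) := by
        rw [Finset.sum_congr rfl (fun j hj => show Hmat F i j = -1 from by
          rcases myHpm (F := F) i j with h1 | h1
          · exact absurd h1 (Finset.mem_filter.mp hj).2
          · exact h1)]
        simp
      rw [e1, e2] at hsplit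
      rw [hsum0] at hsplit
      have hcards := Finset.card_filter_add_card_filter_not
        (s := (Finset.univ : Finset (Option F ⊕ Option F)))
        (p := fun j => Hmat F i j = 1)
      rw [hcardUnivI] at hcards
      have hB : (Finset.univ.filter (fun j : Option F ⊕ Option F => Hmat F i j = -1))
          = (Finset.univ.filter (fun j : Option F ⊕ Option F => ¬ Hmat F i j = 1)) := by
        ext j
        simp only [Finset.mem_filter, Finset.mem_univ, true_and]
        constructor
        · intro h h1
          rw [h1] at h
          exact absurd h (by decide)
        · intro h
          rcases myHpm (F := F) i j with h1 | h1
          · exact absurd h1 h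
          · exact h1
      have hfe : (Finset.univ.filter (fun j => dvec F s i j ≠ 0))
          = (Finset.univ.filter (fun j : Option F ⊕ Option F =>
              Hmat F i j = (if s then (-1:ℤ) else 1))) := by
        ext j
        simp only [Finset.mem_filter, Finset.mem_univ, true_and]
        exact dvec_ne_zero_iff s i j
      rw [hfe]
      cases s
      · simp only [Bool.false_eq_true, if_false]
        omega
      · simp only [if_true]
        rw [hB]
        omega
  -- Part D: the design property
  have partD : ∀ j₁ j₂ j₃ : Option F ⊕ Option F, j₁ ≠ j₂ → j₁ ≠ j₃ → j₂ ≠ j₃ →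
      (Finset.univ.filter (fun p : Bool × (Option F ⊕ Option F) =>
        p.2 ≠ Sum.inl none ∧ dvec F p.1 p.2 j₁ = 1 ∧ dvec F p.1 p.2 j₂ = 1 ∧
          dvec F p.1 p.2 j₃ = 1)).card = (Fintype.card F - 1) / 2 := by
    intro j₁ j₂ j₃ h12 h13 h23
    have hpoint : ∀ i, ((1 + Hmat F i j₁ * Hmat F i j₂)
        + (Hmat F i j₁ * Hmat F i j₃ + Hmat F i j₂ * Hmat F i j₃))
        = if (Hmat F i j₂ = Hmat F i j₁ ∧ Hmat F i j₃ = Hmat F i j₁)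
            then (4:ℤ) else 0 := by
      intro i
      rcases myHpm (F := F) i j₁ with h1 | h1 <;> rcases myHpm (F := F) i j₂ with h2 | h2 <;>
        rcases myHpm (F := F) i j₃ with h3' | h3' <;> rw [h1, h2, h3'] <;> norm_num
    have hsum4 : ∑ i, ((1 + Hmat F i j₁ * Hmat F i j₂)
        + (Hmat F i j₁ * Hmat F i j₃ + Hmat F i j₂ * Hmat F i j₃))
        = 2 * (Fintype.card F : ℤ) + 2 := by
      rw [Finset.sum_add_distrib, Finset.sum_add_distrib, Finset.sum_add_distrib,
        myHcol hchar j₁ j₂, myHcol hchar j₁ j₃, myHcol hchar j₂ j₃,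
        if_neg h12, if_neg h13, if_neg h23]
      rw [Finset.sum_const, hcardUnivI]
      push_cast
      ring
    have hT'card : 4 * (Finset.univ.filter (fun i : Option F ⊕ Option F =>
        Hmat F i j₂ = Hmat F i j₁ ∧ Hmat F i j₃ = Hmat F i j₁)).card
        = 2 * Fintype.card F + 2 := by
      rw [Finset.sum_congr rfl (fun i _ => hpoint i), ← Finset.sum_filter,
        Finset.sum_const] at hsum4
      have h' : ((Finset.univ.filter (fun i : Option F ⊕ Option F =>
          Hmat F i j₂ = Hmat F i j₁ ∧ Hmat F i j₃ = Hmat F i j₁)).card : ℤ) * 4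
          = 2 * (Fintype.card F : ℤ) + 2 := by
        rw [← hsum4]
        simp [nsmul_eq_mul]
      omega
    have hmem : Sum.inl none ∈ Finset.univ.filter (fun i : Option F ⊕ Option F =>
        Hmat F i j₂ = Hmat F i j₁ ∧ Hmat F i j₃ = Hmat F i j₁) := by
      simp [myHone]
    have hbij : (Finset.univ.filter (fun p : Bool × (Option F ⊕ Option F) =>
        p.2 ≠ Sum.inl none ∧ dvec F p.1 p.2 j₁ = 1 ∧ dvec F p.1 p.2 j₂ = 1 ∧
          dvec F p.1 p.2 j₃ = 1)).card
        = ((Finset.univ.filter (fun i : Option F ⊕ Option F =>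
            Hmat F i j₂ = Hmat F i j₁ ∧ Hmat F i j₃ = Hmat F i j₁)).erase
            (Sum.inl none)).card := by
      apply Finset.card_bij (fun p _ => p.2)
      · intro p hp
        simp only [Finset.mem_filter, Finset.mem_univ, true_and] at hp
        obtain ⟨hne, d1, d2, d3⟩ := hp
        rw [dvec_one_iff] at d1 d2 d3
        rw [Finset.mem_erase, Finset.mem_filter]
        exact ⟨hne, Finset.mem_univ _, by rw [d1, d2], by rw [d1, d3]⟩
      · intro p hp p' hp' hpp
        simp only [Finset.mem_filter, Finset.mem_univ, true_and] at hp hp'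
        obtain ⟨hne, d1, d2, d3⟩ := hp
        obtain ⟨hne', d1', d2', d3'⟩ := hp'
        rw [dvec_one_iff] at d1 d1'
        rw [hpp] at d1
        have hss : p.1 = p'.1 := by
          cases hb : p.1 <;> cases hb' : p'.1 <;> rw [hb] at d1 <;> rw [hb'] at d1' <;>
            first
              | rfl
              | (exfalso; rw [d1] at d1'; norm_num at d1')
        exact Prod.ext hss hpp
      · intro i hi2
        rw [Finset.mem_erase, Finset.mem_filter] at hi2
        obtain ⟨hne, -, h2', h3'⟩ := hi2
        rcases myHpm (F := F) i j₁ with h1 | h1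
        · refine ⟨(false, i), Finset.mem_filter.mpr ⟨Finset.mem_univ _, hne, ?_, ?_, ?_⟩, rfl⟩ <;>
            rw [dvec_one_iff, if_neg Bool.false_ne_true] <;>
            first
              | exact h1
              | (rw [h2']; exact h1)
              | (rw [h3']; exact h1)
        · refine ⟨(true, i), Finset.mem_filter.mpr ⟨Finset.mem_univ _, hne, ?_, ?_, ?_⟩, rfl⟩ <;>
            rw [dvec_one_iff, if_pos rfl] <;>
            first
              | exact h1
              | (rw [h2']; exact h1)
              | (rw [h3']; exact h1)
    rw [hbij, Finset.card_erase_of_mem hmem]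
    obtain ⟨m, hm⟩ := hq
    omega
  exact ⟨partA, partB, partC, partD⟩
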